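/- Let T be a tree, δ an ordinal with δ+1 < ht(T), G a condensation of the tree T|(δ+1) such that G[L_δ] = L_δ, and for each t ∈ L_δ let f_t be a condensation from the tree [t,·) := {s ∈ T : s ≥ t} onto [G(t),·). Then F := G ∪ ⋃_{t∈L_δ} f_t is a well-defined condensation of T. -/
import Mathlib


/- A tree is a partial order in which the set of strict predecessors of every
element is well-ordered. Basic vocabulary: condensations, automorphisms,
reversibility, heights, levels, nodes, upward closures, branches. -/

universe u v

/- The height of an element `t`: the order type of the set `(·,t)` of its strict
predecessors (which is well-ordered when the order is a tree). -/
open Classical in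
noncomputable def treeHt {T : Type u} [PartialOrder T] (t : T) : Ordinal.{u} :=
  if h : IsWellOrder {s : T // s < t} (fun a b => (a : T) < (b : T)) then
    @Ordinal.type {s : T // s < t} (fun a b => (a : T) < (b : T)) h
  else 0

/-- A partial order is a tree iff every set `(·,t)` is well-ordered by `<`. -/
def IsTree (T : Type u) [PartialOrder T] : Prop :=
  ∀ t : T, IsWellOrder {s : T // s < t} (fun a b => (a : T) < (b : T))

/-- A condensation: a bijective endomorphism. -/
def IsCond {T : Type u} [PartialOrder T] (f : T → T) : Prop :=
  Function.Bijective f ∧ ∀ s t : T, s < t → f s < f t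

/-- An automorphism: a bijection preserving and reflecting `<`. -/
def IsAuto {T : Type u} [PartialOrder T] (f : T → T) : Prop :=
  Function.Bijective f ∧ ∀ s t : T, s < t ↔ f s < f t

/-- A structure is reversible iff every condensation is an automorphism. -/
def Reversible (T : Type u) [PartialOrder T] : Prop :=
  ∀ f : T → T, IsCond f → IsAuto f

/-- The `α`-th level: elements of height `α`. -/
def level (T : Type u) [PartialOrder T] (α : Ordinal.{u}) : Set T :=
  {t : T | treeHt t = α}

/-- The height of the tree: the least ordinal `α` with `L_α = ∅`. -/
noncomputable def treeHeight (T : Type u) [PartialOrder T] : Ordinal.{u} :=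
  sInf {α : Ordinal.{u} | level T α = ∅}

/-- Nodes: equivalence classes of the relation `s ∼ t` iff `(·,s) = (·,t)`. -/
def IsNode {T : Type u} [PartialOrder T] (N : Set T) : Prop :=
  ∃ t : T, N = {s : T | Set.Iio s = Set.Iio t}

/-- `S↑`, the upward closure of `S`. -/
def upClo {T : Type u} [PartialOrder T] (S : Set T) : Set T :=
  {t : T | ∃ s ∈ S, s ≤ t}

/-- A branch: a maximal chain. -/
def IsBranch {T : Type u} [PartialOrder T] (b : Set T) : Prop :=
  IsMaxChain (· ≤ ·) b

/- The height (order type) of a chain (junk value `0` if not well-ordered;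
in a tree every chain is well-ordered). -/
open Classical in
noncomputable def chainHt {T : Type u} [PartialOrder T] (b : Set T) : Ordinal.{u} :=
  if h : IsWellOrder b (fun x y : b => (x : T) < (y : T)) then
    @Ordinal.type b (fun x y : b => (x : T) < (y : T)) h
  else 0


section Helpers

lemma treeHt_eq' {T : Type u} [PartialOrder T] (hT : IsTree T) (t : T) :
    treeHt t = @Ordinal.type {s : T // s < t} (fun a b => (a : T) < (b : T)) (hT t) :=
  dif_pos (hT t)

lemma treeHt_eq_typein' {T : Type u} [PartialOrder T] (hT : IsTree T) {s x : T} (h : s < x) :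
    treeHt s = @Ordinal.typein {u : T // u < x} (fun a b => (a : T) < (b : T)) (hT x) ⟨s, h⟩ := by
  haveI := hT x
  haveI := hT s
  rw [treeHt_eq' hT, ← Ordinal.type_subrel]
  refine Ordinal.type_eq.2 ⟨?_⟩
  exact ⟨{ toFun := fun u => ⟨⟨u.1, lt_trans u.2 h⟩, u.2⟩
           invFun := fun b => ⟨b.1.1, b.2⟩
           left_inv := fun u => rfl
           right_inv := fun b => rfl }, Iff.rfl⟩

lemma treeHt_lt' {T : Type u} [PartialOrder T] (hT : IsTree T) {s x : T} (h : s < x) :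
    treeHt s < treeHt x := by
  haveI := hT x
  rw [treeHt_eq_typein' hT h, treeHt_eq' hT]
  exact Ordinal.typein_lt_type _ _

lemma exists_level_lt' {T : Type u} [PartialOrder T] (hT : IsTree T) {x : T} {α : Ordinal.{u}}
    (h : α < treeHt x) : ∃ s : T, s < x ∧ treeHt s = α := by
  haveI := hT x
  rw [treeHt_eq' hT] at h
  obtain ⟨⟨s, hs⟩, he⟩ := Ordinal.typein_surj _ h
  exact ⟨s, hs, by rw [treeHt_eq_typein' hT hs, he]⟩

lemma pred_comparable' {T : Type u} [PartialOrder T] (hT : IsTree T) {s t x : T}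
    (hs : s < x) (ht : t < x) : s < t ∨ s = t ∨ t < s := by
  haveI := hT x
  rcases trichotomous_of (fun a b : {u : T // u < x} => (a : T) < (b : T)) ⟨s, hs⟩ ⟨t, ht⟩
    with h | h | h
  · exact Or.inl h
  · exact Or.inr (Or.inl (congrArg Subtype.val h))
  · exact Or.inr (Or.inr h)

end Helpers

/-- Let `T` be a tree, `δ` an ordinal with `δ + 1 < ht(T)`, `G` a
condensation of the tree `T|(δ+1)` with `G[L_δ] = L_δ`, and for each `t ∈ L_δ` let
`f_t` be a condensation from `[t,·)` onto `[G(t),·)`. Then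
`F := G ∪ ⋃_{t∈L_δ} f_t` is a well-defined condensation of `T`. -/
theorem stmt16 {T : Type u} [PartialOrder T] (hT : IsTree T)
    (δ : Ordinal.{u}) (hδ : δ + 1 < treeHeight T)
    (G : {t : T // treeHt t < δ + 1} → {t : T // treeHt t < δ + 1})
    (hG : IsCond G)
    (hGδ : (fun t : {t : T // treeHt t < δ + 1} => (G t : T)) ''
        {t : {t : T // treeHt t < δ + 1} | treeHt (t : T) = δ} = level T δ)
    (f : {t : T // treeHt t < δ + 1} → T → T)
    (hf : ∀ t : {t : T // treeHt t < δ + 1}, treeHt (t : T) = δ →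
      Set.BijOn (f t) (Set.Ici (t : T)) (Set.Ici (G t : T)) ∧
      ∀ x y : T, x ∈ Set.Ici (t : T) → y ∈ Set.Ici (t : T) → x < y →
        f t x < f t y) :
    ∃ F : T → T, IsCond F ∧
      (∀ t : {t : T // treeHt t < δ + 1}, F (t : T) = (G t : T)) ∧
      (∀ t : {t : T // treeHt t < δ + 1}, treeHt (t : T) = δ →
        ∀ x ∈ Set.Ici (t : T), F x = f t x) := by
  classical
  have hδδ : δ < δ + 1 := by
    rw [Ordinal.add_one_eq_succ]; exact Order.lt_succ δ
  have hle_of_lt : ∀ β : Ordinal.{u}, β < δ + 1 → β ≤ δ := by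
    intro β hβ
    rw [Ordinal.add_one_eq_succ, Order.lt_succ_iff] at hβ
    exact hβ
  -- G maps level δ to level δ
  have hGht : ∀ t : {t : T // treeHt t < δ + 1}, treeHt (t : T) = δ → treeHt (G t : T) = δ := by
    intro t ht
    have : (G t : T) ∈ level T δ := by
      rw [← hGδ]; exact ⟨t, ht, rfl⟩
    exact this
  -- f t sends t to G t
  have hftt : ∀ t : {t : T // treeHt t < δ + 1}, treeHt (t : T) = δ → f t (t : T) = (G t : T) := by
    intro t ht
    obtain ⟨hbij, hmono⟩ := hf t ht
    obtain ⟨x, hx, hfx⟩ := hbij.surjOn (Set.self_mem_Ici (a := (G t : T)))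
    have hge : (G t : T) ≤ f t (t : T) := hbij.mapsTo (Set.self_mem_Ici)
    rcases eq_or_lt_of_le (hx : (t : T) ≤ x) with he | hlt
    · rw [← he] at hfx; rw [hfx]
    · exfalso
      have := hmono _ _ Set.self_mem_Ici hx hlt
      rw [hfx] at this
      exact absurd (lt_of_le_of_lt hge this) (lt_irrefl _)
  -- uniqueness of level-δ predecessors
  have huniq : ∀ x s t : T, s ≤ x → t ≤ x → treeHt s = δ → treeHt t = δ → s = t := by
    intro x s t hs ht h1 h2
    rcases eq_or_lt_of_le hs with rfl | hs'
    · rcases eq_or_lt_of_le ht with rfl | ht'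
      · rfl
      · exfalso
        have h3 := treeHt_lt' hT ht'
        rw [h1, h2] at h3
        exact lt_irrefl δ h3
    · rcases eq_or_lt_of_le ht with rfl | ht'
      · exfalso
        have h3 := treeHt_lt' hT hs'
        rw [h1, h2] at h3
        exact lt_irrefl δ h3
      · rcases pred_comparable' hT hs' ht' with h | h | h
        · exfalso
          have h3 := treeHt_lt' hT h
          rw [h1, h2] at h3
          exact lt_irrefl δ h3
        · exact h
        · exfalso
          have h3 := treeHt_lt' hT h
          rw [h1, h2] at h3
          exact lt_irrefl δ h3
  -- existence of a level-δ predecessor of any high element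
  have hex : ∀ x : T, ¬ treeHt x < δ + 1 →
      ∃ t : {t : T // treeHt t < δ + 1}, treeHt (t : T) = δ ∧ (t : T) ≤ x := by
    intro x hx
    have hδx : δ < treeHt x := lt_of_lt_of_le hδδ (not_lt.1 hx)
    obtain ⟨s, hsx, hs⟩ := exists_level_lt' hT hδx
    exact ⟨⟨s, hs ▸ hδδ⟩, hs, le_of_lt hsx⟩
  -- the definition of F
  let F : T → T := fun x =>
    if h : treeHt x < δ + 1 then (G ⟨x, h⟩ : T) else f (hex x h).choose x
  have hFpos : ∀ (x : T) (h : treeHt x < δ + 1), F x = (G ⟨x, h⟩ : T) :=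
    fun x h => dif_pos h
  have hFneg : ∀ (x : T) (h : ¬ treeHt x < δ + 1), F x = f (hex x h).choose x :=
    fun x h => dif_neg h
  -- F agrees with G below δ + 1
  have hA : ∀ t : {t : T // treeHt t < δ + 1}, F (t : T) = (G t : T) := by
    intro t
    rw [hFpos (t : T) t.2, Subtype.coe_eta]
  -- F agrees with f t above level δ
  have hB : ∀ t : {t : T // treeHt t < δ + 1}, treeHt (t : T) = δ →
      ∀ x ∈ Set.Ici (t : T), F x = f t x := by
    intro t ht x hx
    by_cases h : treeHt x < δ + 1
    · rcases eq_or_lt_of_le (hx : (t : T) ≤ x) with he | hlt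
      · rw [← he, hA t, hftt t ht]
      · exfalso
        have h1 : δ < treeHt x := ht ▸ treeHt_lt' hT hlt
        exact absurd (hle_of_lt _ h) (not_le.2 h1)
    · rw [hFneg x h]
      obtain ⟨ht', hx'⟩ := (hex x h).choose_spec
      have : (hex x h).choose = t :=
        Subtype.ext (huniq x _ _ hx' hx ht' ht)
      rw [this]
  -- a level-δ predecessor is strictly below any high element
  have hlt_of_le : ∀ (t : {t : T // treeHt t < δ + 1}) (x : T), treeHt (t : T) = δ →
      ¬ treeHt x < δ + 1 → (t : T) ≤ x → (t : T) < x := by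
    intro t x ht hx hle
    rcases eq_or_lt_of_le hle with he | h
    · exfalso
      apply hx
      rw [← he, ht]
      exact hδδ
    · exact h
  -- F is strictly monotone
  have hmono : ∀ x y : T, x < y → F x < F y := by
    intro x y hxy
    by_cases hy : treeHt y < δ + 1
    · have hx : treeHt x < δ + 1 := lt_trans (treeHt_lt' hT hxy) hy
      rw [hFpos x hx, hFpos y hy]
      exact hG.2 ⟨x, hx⟩ ⟨y, hy⟩ (Subtype.mk_lt_mk.2 hxy)
    · rw [hFneg y hy]
      obtain ⟨ht₁, ht₁y⟩ := (hex y hy).choose_spec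
      set t₁ := (hex y hy).choose with ht₁def
      have ht₁lt : (t₁ : T) < y := hlt_of_le t₁ y ht₁ hy ht₁y
      by_cases hx : treeHt x < δ + 1
      · rw [hFpos x hx]
        -- x ≤ t₁
        have hxle : x ≤ (t₁ : T) := by
          rcases pred_comparable' hT hxy ht₁lt with h | h | h
          · exact le_of_lt h
          · exact le_of_eq h
          · exfalso
            have : δ < treeHt x := ht₁ ▸ treeHt_lt' hT h
            exact absurd (hle_of_lt _ hx) (not_le.2 this)
        have h3 : f t₁ (t₁ : T) < f t₁ y :=
          (hf t₁ ht₁).2 _ _ Set.self_mem_Ici (le_of_lt ht₁lt) ht₁lt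
        rcases eq_or_lt_of_le hxle with he | hlt
        · have : (G ⟨x, hx⟩ : T) = f t₁ (t₁ : T) := by
            rw [hftt t₁ ht₁]
            congr 1
            exact congrArg G (Subtype.ext he)
          rw [this]; exact h3
        · have h1 : (G ⟨x, hx⟩ : T) < (G t₁ : T) :=
            hG.2 ⟨x, hx⟩ t₁ (Subtype.mk_lt_mk.2 (by exact hlt))
          rw [← hftt t₁ ht₁] at h1
          exact lt_trans h1 h3
      · rw [hFneg x hx]
        obtain ⟨ht₀, ht₀x⟩ := (hex x hx).choose_spec
        set t₀ := (hex x hx).choose with ht₀def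
        have ht₀y : (t₀ : T) ≤ y := le_trans ht₀x (le_of_lt hxy)
        have : t₀ = t₁ := Subtype.ext (huniq y _ _ ht₀y ht₁y ht₀ ht₁)
        rw [this]
        exact (hf t₁ ht₁).2 _ _ (this ▸ ht₀x) (le_of_lt ht₁lt) hxy
  -- F is injective
  have hinj : Function.Injective F := by
    intro x y hxy
    by_cases hx : treeHt x < δ + 1
    · by_cases hy : treeHt y < δ + 1
      · rw [hFpos x hx, hFpos y hy] at hxy
        have h2 := hG.1.1 (Subtype.ext hxy)
        exact congrArg Subtype.val h2
      · exfalso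
        rw [hFpos x hx, hFneg y hy] at hxy
        obtain ⟨ht₁, ht₁y⟩ := (hex y hy).choose_spec
        set t₁ := (hex y hy).choose with ht₁def
        have hmem : f t₁ y ∈ Set.Ici (G t₁ : T) := (hf t₁ ht₁).1.mapsTo ht₁y
        have hGle : (G t₁ : T) ≤ (G ⟨x, hx⟩ : T) := hxy ▸ hmem
        rcases eq_or_lt_of_le hGle with he | hlord
        · -- then f t₁ t₁ = f t₁ y, so t₁ = y, contradiction with height of y
          have h1 : f t₁ (t₁ : T) = f t₁ y := by
            rw [hftt t₁ ht₁, he, ← hxy]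
          have h2 : (t₁ : T) = y :=
            (hf t₁ ht₁).1.injOn Set.self_mem_Ici ht₁y h1
          apply hy
          rw [← h2, ht₁]
          exact hδδ
        · have h1 : δ < treeHt (G ⟨x, hx⟩ : T) := by
            have h3 := treeHt_lt' hT hlord
            rwa [hGht t₁ ht₁] at h3
          exact absurd (hle_of_lt _ (G ⟨x, hx⟩).2) (not_le.2 h1)
      -- (symmetric mixed case handled below)
    · by_cases hy : treeHt y < δ + 1
      · exfalso
        rw [hFpos y hy, hFneg x hx] at hxy
        obtain ⟨ht₁, ht₁x⟩ := (hex x hx).choose_spec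
        set t₁ := (hex x hx).choose with ht₁def
        have hmem : f t₁ x ∈ Set.Ici (G t₁ : T) := (hf t₁ ht₁).1.mapsTo ht₁x
        have hGle : (G t₁ : T) ≤ (G ⟨y, hy⟩ : T) := hxy ▸ hmem
        rcases eq_or_lt_of_le hGle with he | hlord
        · have h1 : f t₁ (t₁ : T) = f t₁ x := by
            rw [hftt t₁ ht₁, he, hxy]
          have h2 : (t₁ : T) = x :=
            (hf t₁ ht₁).1.injOn Set.self_mem_Ici ht₁x h1
          apply hx
          rw [← h2, ht₁]
          exact hδδ
        · have h1 : δ < treeHt (G ⟨y, hy⟩ : T) := by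
            have h3 := treeHt_lt' hT hlord
            rwa [hGht t₁ ht₁] at h3
          exact absurd (hle_of_lt _ (G ⟨y, hy⟩).2) (not_le.2 h1)
      · rw [hFneg x hx, hFneg y hy] at hxy
        obtain ⟨ht₀, ht₀x⟩ := (hex x hx).choose_spec
        obtain ⟨ht₁, ht₁y⟩ := (hex y hy).choose_spec
        set t₀ := (hex x hx).choose with ht₀def
        set t₁ := (hex y hy).choose with ht₁def
        have hm0 : f t₀ x ∈ Set.Ici (G t₀ : T) := (hf t₀ ht₀).1.mapsTo ht₀x
        have hm1 : f t₁ y ∈ Set.Ici (G t₁ : T) := (hf t₁ ht₁).1.mapsTo ht₁y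
        have hGeq : (G t₀ : T) = (G t₁ : T) :=
          huniq (f t₀ x) _ _ hm0 (hxy ▸ hm1) (hGht t₀ ht₀) (hGht t₁ ht₁)
        have hteq : t₀ = t₁ := hG.1.1 (Subtype.ext hGeq)
        rw [← hteq] at hxy ht₁y
        exact (hf t₀ ht₀).1.injOn ht₀x ht₁y hxy
  -- F is surjective
  have hsurj : Function.Surjective F := by
    intro z
    by_cases hz : treeHt z < δ + 1
    · obtain ⟨w, hw⟩ := hG.1.2 ⟨z, hz⟩
      exact ⟨(w : T), by rw [hA w, hw]⟩
    · have hδz : δ < treeHt z := lt_of_lt_of_le hδδ (not_lt.1 hz)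
      obtain ⟨s, hsz, hs⟩ := exists_level_lt' hT hδz
      have hsl : s ∈ level T δ := hs
      rw [← hGδ] at hsl
      obtain ⟨u, hu, hGu⟩ := hsl
      have hGu' : (G u : T) = s := hGu
      have hzmem : z ∈ Set.Ici (G u : T) := by
        rw [Set.mem_Ici, hGu']; exact le_of_lt hsz
      obtain ⟨w, hw, hfw⟩ := (hf u hu).1.surjOn hzmem
      exact ⟨w, by rw [hB u hu w hw, hfw]⟩
  exact ⟨F, ⟨⟨hinj, hsurj⟩, hmono⟩, hA, hB⟩
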